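/- (Deterministic form of Theorem 2.1(b).) If γ > 2, then there exists N₀ such that for all N ≥ N₀, every γ-minimizer j* at N satisfies j* ≤ k. -/

import Mathlib

open Filter

/-- For `σ > 0`, `ψ_σ(x) = x + σ²/x`. -/
noncomputable def psi (σ x : ℝ) : ℝ := x + σ ^ 2 / x

/-- The score `GAIC^γ_j(N) = (N/(2σ²)) Σ_{i=j+1}^{q} ℓ_i(N)² + γ(Nj − j(j−1)/2)`. -/
noncomputable def GAIC (σ : ℝ) (q : ℕ) (ℓ : ℕ → ℕ → ℝ) (γ : ℝ) (j N : ℕ) : ℝ :=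
  ((N : ℝ) / (2 * σ ^ 2)) * ∑ i ∈ Finset.Icc (j + 1) q, (ℓ i N) ^ 2
    + γ * ((N : ℝ) * (j : ℝ) - (j : ℝ) * ((j : ℝ) - 1) / 2)

/-- Deterministic form of Theorem 2.1(b): if `γ > 2`, then eventually every
`γ`-minimizer `j*` satisfies `j* ≤ k`. -/
theorem gaic_no_overestimation
    (σ : ℝ) (hσ : 0 < σ) (q k : ℕ) (hq : 1 ≤ q) (hkq : k ≤ q)
    (lam : ℕ → ℝ)
    (hlam_anti : ∀ i j : ℕ, 1 ≤ i → i ≤ j → j ≤ k → lam j ≤ lam i)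
    (hlam_gt : ∀ i : ℕ, 1 ≤ i → i ≤ k → σ < lam i)
    (ℓ : ℕ → ℕ → ℝ)
    (hℓ_anti : ∀ N i j : ℕ, 1 ≤ i → i ≤ j → j ≤ q → ℓ j N ≤ ℓ i N)
    (hspike : ∀ i : ℕ, 1 ≤ i → i ≤ k →
      Tendsto (fun N : ℕ => ℓ i N) atTop (nhds (psi σ (lam i))))
    (hbulk : ∀ i : ℕ, k < i → i ≤ q →
      Tendsto (fun N : ℕ => ℓ i N) atTop (nhds (2 * σ)))
    (γ : ℝ) (hγ : 2 < γ) :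
    ∃ N₀ : ℕ, ∀ N ≥ N₀, ∀ jstar : ℕ, jstar ≤ q →
      (∀ j : ℕ, j ≤ q → GAIC σ q ℓ γ jstar N ≤ GAIC σ q ℓ γ j N) → jstar ≤ k := by
  have h2 : (2 * σ ^ 2 : ℝ) ≠ 0 := by positivity
  have key : ∀ j : ℕ, k < j → j ≤ q →
      Tendsto (fun N : ℕ => GAIC σ q ℓ γ j N - GAIC σ q ℓ γ k N) atTop atTop := by
    intro j hkj hjq
    have hjk1 : (1 : ℝ) ≤ (j : ℝ) - (k : ℝ) := by
      have : (k : ℝ) + 1 ≤ (j : ℝ) := by exact_mod_cast hkj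
      linarith
    set S : ℕ → ℝ := fun N => ∑ i ∈ Finset.Ioc k j, (ℓ i N) ^ 2 with hS
    have hsum : Tendsto S atTop (nhds (4 * σ ^ 2 * ((j : ℝ) - (k : ℝ)))) := by
      have h1 : Tendsto S atTop (nhds (∑ i ∈ Finset.Ioc k j, (2 * σ) ^ 2)) := by
        apply tendsto_finset_sum
        intro i hi
        simp only [Finset.mem_Ioc] at hi
        exact (hbulk i hi.1 (hi.2.trans hjq)).pow 2
      have hval : (∑ i ∈ Finset.Ioc k j, (2 * σ : ℝ) ^ 2)
          = 4 * σ ^ 2 * ((j : ℝ) - (k : ℝ)) := by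
        rw [Finset.sum_const, Nat.card_Ioc, nsmul_eq_mul, Nat.cast_sub hkj.le]
        ring
      rwa [hval] at h1
    set f : ℕ → ℝ := fun N => γ * ((j : ℝ) - (k : ℝ)) - S N / (2 * σ ^ 2) with hf
    have hflim : Tendsto f atTop (nhds ((γ - 2) * ((j : ℝ) - (k : ℝ)))) := by
      have h1 : Tendsto f atTop
          (nhds (γ * ((j : ℝ) - (k : ℝ)) - 4 * σ ^ 2 * ((j : ℝ) - (k : ℝ)) / (2 * σ ^ 2))) :=
        (tendsto_const_nhds (x := γ * ((j : ℝ) - (k : ℝ)))).sub (hsum.div_const (2 * σ ^ 2))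
      have heq : γ * ((j : ℝ) - (k : ℝ)) - 4 * σ ^ 2 * ((j : ℝ) - (k : ℝ)) / (2 * σ ^ 2)
          = (γ - 2) * ((j : ℝ) - (k : ℝ)) := by
        field_simp
        ring
      rwa [heq] at h1
    have hLpos : 0 < (γ - 2) * ((j : ℝ) - (k : ℝ)) := by nlinarith
    set C : ℝ := γ * ((j : ℝ) * ((j : ℝ) - 1) - (k : ℝ) * ((k : ℝ) - 1)) / 2 with hC
    have hrepr : ∀ N : ℕ, GAIC σ q ℓ γ j N - GAIC σ q ℓ γ k N = (N : ℝ) * f N - C := by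
      intro N
      have hsplit : (∑ i ∈ Finset.Icc (k + 1) q, (ℓ i N) ^ 2)
          = S N + ∑ i ∈ Finset.Icc (j + 1) q, (ℓ i N) ^ 2 := by
        rw [hS, Finset.Icc_add_one_left_eq_Ioc, Finset.Icc_add_one_left_eq_Ioc,
          Finset.sum_Ioc_consecutive _ hkj.le hjq]
      simp only [GAIC, hsplit, hf, hC]
      field_simp
      ring
    have hmul : Tendsto (fun N : ℕ => (N : ℝ) * f N) atTop atTop :=
      Tendsto.atTop_mul_pos hLpos tendsto_natCast_atTop_atTop hflim
    have := tendsto_atTop_add_const_right atTop (-C) hmul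
    simp only [← sub_eq_add_neg] at this
    exact (funext hrepr : (fun N : ℕ => GAIC σ q ℓ γ j N - GAIC σ q ℓ γ k N)
      = fun N : ℕ => (N : ℝ) * f N - C) ▸ this
  have hall : ∀ᶠ N : ℕ in atTop, ∀ j ∈ Finset.Ioc k q,
      0 < GAIC σ q ℓ γ j N - GAIC σ q ℓ γ k N := by
    rw [eventually_all_finset]
    intro j hj
    simp only [Finset.mem_Ioc] at hj
    exact (key j hj.1 hj.2).eventually_gt_atTop 0
  obtain ⟨N₀, hN₀⟩ := eventually_atTop.mp hall
  refine ⟨N₀, fun N hN jstar hjq hmin => ?_⟩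
  by_contra h
  push_neg at h
  have hd := hN₀ N hN jstar (Finset.mem_Ioc.mpr ⟨h, hjq⟩)
  have := hmin k hkq
  linarith
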